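/- Let E be a real inner product space, let v : E → ℝ → E be L_v-Lipschitz in its first argument uniformly in time (L_v ≥ 0), let g : E → E satisfy ‖g(z)‖ ≤ G for all z (G ≥ 0), let t₀ ∈ [0, 1), η_max ≥ 0, and define the quadratic ramp schedule η(t) = η_max·((t − t₀)/(1 − t₀))² for t ∈ [t₀, 1]. Suppose x, y : ℝ → E satisfy, for all t ∈ [t₀, 1], x′(t) = v(x(t), t) and y′(t) = v(y(t), t) − η(t) • g(y(t)), with x(t₀) = y(t₀). Then ‖y(1) − x(1)‖ ≤ e^{L_v(1−t₀)} · η_max · G · (1 − t₀)/3. (Quantitative terminal deviation bound for the paper's quadratic late-time adjustment schedule, obtained from Proposition A.4 using ∫_{t₀}^{1} η(s) ds = η_max(1 − t₀)/3.) -/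

import Mathlib

/-- Quantitative terminal deviation bound for the paper's quadratic late-time
adjustment schedule `η(t) = η_max ((t - t₀)/(1 - t₀))²` on `[t₀, 1]`:
`‖y 1 - x 1‖ ≤ e^{Lv (1 - t₀)} · η_max · G · (1 - t₀) / 3`, obtained from
Proposition A.4 using `∫_{t₀}^1 η(s) ds = η_max (1 - t₀)/3`. -/
theorem quadratic_schedule_terminal_bound
    {E : Type*} [NormedAddCommGroup E] [InnerProductSpace ℝ E]
    (v : E → ℝ → E) (Lv : ℝ) (hLv : 0 ≤ Lv)
    (hlip : ∀ (t : ℝ) (z w : E), ‖v z t - v w t‖ ≤ Lv * ‖z - w‖)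
    (g : E → E) (G : ℝ) (hG : 0 ≤ G) (hgb : ∀ z : E, ‖g z‖ ≤ G)
    (t₀ : ℝ) (ht₀ : t₀ ∈ Set.Ico (0 : ℝ) 1) (ηmax : ℝ) (hηmax : 0 ≤ ηmax)
    (η : ℝ → ℝ) (hη : ∀ t ∈ Set.Icc t₀ 1, η t = ηmax * ((t - t₀) / (1 - t₀)) ^ 2)
    (x y : ℝ → E)
    (hx : ∀ t ∈ Set.Icc t₀ 1, HasDerivAt x (v (x t) t) t)
    (hy : ∀ t ∈ Set.Icc t₀ 1, HasDerivAt y (v (y t) t - η t • g (y t)) t)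
    (h0 : x t₀ = y t₀) :
    ‖y 1 - x 1‖ ≤ Real.exp (Lv * (1 - t₀)) * ηmax * G * (1 - t₀) / 3 := by
  obtain ⟨ht₀0, ht₀1⟩ := ht₀
  have hΔ : (0:ℝ) < 1 - t₀ := by linarith
  set Δ : ℝ := 1 - t₀ with hΔdef
  set c : ℝ := ηmax * G / (3 * Δ ^ 2) with hc
  have hc0 : 0 ≤ c := by
    apply div_nonneg (mul_nonneg hηmax hG)
    positivity
  -- the deviation function and its derivative
  set f : ℝ → E := fun t => y t - x t with hf
  set f' : ℝ → E := fun t => (v (y t) t - η t • g (y t)) - v (x t) t with hf'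
  have hfc : ContinuousOn f (Set.Icc t₀ 1) := fun t ht =>
    (((hy t ht).sub (hx t ht)).continuousAt).continuousWithinAt
  have hfd : ∀ t ∈ Set.Ico t₀ 1, HasDerivWithinAt f (f' t) (Set.Ici t) t := fun t ht =>
    (((hy t (Set.mem_Icc_of_Ico ht)).sub (hx t (Set.mem_Icc_of_Ico ht))).hasDerivWithinAt)
  -- bound on ‖f' t‖
  have hfb : ∀ t ∈ Set.Ico t₀ 1, ‖f' t‖ ≤ Lv * ‖f t‖ + 3 * c * (t - t₀) ^ 2 := by
    intro t ht
    have htI : t ∈ Set.Icc t₀ 1 := Set.mem_Icc_of_Ico ht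
    have hηt : η t = ηmax * ((t - t₀) / Δ) ^ 2 := hη t htI
    have hηt0 : 0 ≤ η t := by
      rw [hηt]; positivity
    have h1 : ‖f' t‖ ≤ ‖v (y t) t - v (x t) t‖ + ‖η t • g (y t)‖ := by
      have : f' t = (v (y t) t - v (x t) t) - η t • g (y t) := by
        simp only [hf']; abel
      rw [this]
      exact norm_sub_le _ _
    have h2 : ‖v (y t) t - v (x t) t‖ ≤ Lv * ‖f t‖ := hlip t (y t) (x t)
    have h3 : ‖η t • g (y t)‖ ≤ η t * G := by
      rw [norm_smul, Real.norm_eq_abs, abs_of_nonneg hηt0]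
      exact mul_le_mul_of_nonneg_left (hgb _) hηt0
    have h4 : η t * G = 3 * c * (t - t₀) ^ 2 := by
      rw [hηt, hc]
      field_simp
    linarith [h1, h2, h3, h4.le]
  -- the majorant family
  have key : ∀ ε : ℝ, 0 < ε →
      ‖f 1‖ ≤ c * Real.exp (Lv * Δ) * Δ ^ 3 + ε * Real.exp ((Lv + 1) * Δ) := by
    intro ε hε
    set B : ℝ → ℝ := fun t =>
      c * Real.exp (Lv * (t - t₀)) * (t - t₀) ^ 3 + ε * Real.exp ((Lv + 1) * (t - t₀)) with hB
    set B' : ℝ → ℝ := fun t =>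
      c * Real.exp (Lv * (t - t₀)) * (Lv * (t - t₀) ^ 3 + 3 * (t - t₀) ^ 2)
        + ε * ((Lv + 1) * Real.exp ((Lv + 1) * (t - t₀))) with hB'
    have hBd : ∀ t : ℝ, HasDerivAt B (B' t) t := by
      intro t
      have h1 : HasDerivAt (fun t : ℝ => t - t₀) 1 t := by
        simpa using (hasDerivAt_id t).sub_const t₀
      have hexp : HasDerivAt (fun t : ℝ => Real.exp (Lv * (t - t₀)))
          (Lv * Real.exp (Lv * (t - t₀))) t := by
        have := (Real.hasDerivAt_exp (Lv * (t - t₀))).comp t ((h1.const_mul Lv))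
        simpa [mul_comm, Function.comp_def] using this
      have hpow : HasDerivAt (fun t : ℝ => (t - t₀) ^ 3) (3 * (t - t₀) ^ 2) t := by
        have := (h1.pow 3)
        simpa [Pi.pow_def] using this
      have hexp2 : HasDerivAt (fun t : ℝ => Real.exp ((Lv + 1) * (t - t₀)))
          ((Lv + 1) * Real.exp ((Lv + 1) * (t - t₀))) t := by
        have := (Real.hasDerivAt_exp ((Lv + 1) * (t - t₀))).comp t ((h1.const_mul (Lv + 1)))
        simpa [mul_comm, Function.comp_def] using this
      have : HasDerivAt B _ t := (((hexp.const_mul c).mul hpow).add (hexp2.const_mul ε))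
      convert this using 1
      simp only [hB']
      ring
    have ha : ‖f t₀‖ ≤ B t₀ := by
      simp [hf, hB, h0, le_of_lt hε]
    have hbound : ∀ t ∈ Set.Ico t₀ 1, ‖f t‖ = B t → ‖f' t‖ < B' t := by
      intro t ht heq
      have ht0 : 0 ≤ t - t₀ := sub_nonneg.2 ht.1
      have hexp1 : (1:ℝ) ≤ Real.exp (Lv * (t - t₀)) :=
        Real.one_le_exp (by positivity)
      have hexp20 : (0:ℝ) < Real.exp ((Lv + 1) * (t - t₀)) := Real.exp_pos _
      have h5 := hfb t ht
      rw [heq] at h5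
      have h6 : Lv * B t + 3 * c * (t - t₀) ^ 2 < B' t := by
        simp only [hB, hB']
        have e1 : 3 * c * (t - t₀) ^ 2 ≤ c * Real.exp (Lv * (t - t₀)) * (3 * (t - t₀) ^ 2) := by
          nlinarith [mul_nonneg hc0 (mul_nonneg (by norm_num : (0:ℝ) ≤ 3) (sq_nonneg (t - t₀)))]
        have e2 : ε * (Lv * Real.exp ((Lv + 1) * (t - t₀)))
            < ε * ((Lv + 1) * Real.exp ((Lv + 1) * (t - t₀))) := by
          apply mul_lt_mul_of_pos_left _ hε
          nlinarith
        nlinarith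
      linarith
    have := image_norm_le_of_norm_deriv_right_lt_deriv_boundary' hfc hfd ha
      (fun t _ => (hBd t).continuousAt.continuousWithinAt)
      (fun t _ => (hBd t).hasDerivWithinAt) hbound (Set.right_mem_Icc.2 (le_of_lt ht₀1))
    simpa [hB, hΔdef] using this
  -- take ε → 0
  have hfinal : ‖f 1‖ ≤ c * Real.exp (Lv * Δ) * Δ ^ 3 := by
    refine le_of_forall_pos_le_add fun ε' hε' => ?_
    have hEpos : (0:ℝ) < Real.exp ((Lv + 1) * Δ) := Real.exp_pos _
    have := key (ε' / Real.exp ((Lv + 1) * Δ)) (div_pos hε' hEpos)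
    rwa [div_mul_cancel₀ _ (ne_of_gt hEpos)] at this
  have hval : c * Real.exp (Lv * Δ) * Δ ^ 3 = Real.exp (Lv * (1 - t₀)) * ηmax * G * (1 - t₀) / 3 := by
    rw [hc, hΔdef]
    field_simp
  calc ‖y 1 - x 1‖ = ‖f 1‖ := rfl
    _ ≤ c * Real.exp (Lv * Δ) * Δ ^ 3 := hfinal
    _ = _ := hval
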